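/- arXiv:math-ph/0612087 — 3 statements merged into one kernel-verified Lean document; each statement's English description precedes it below -/
import Mathlib

section
/- Let f ∈ L²(Γ) ∩ L¹(Γ) where Γ is a countable disjoint union of unit intervals, and suppose each component fₑ ∈ H¹(0,1) with Σₑ ‖fₑ‖²_{H¹} < ∞. Then ‖f‖²_{L²(Γ)} ≤ c² · (Σₑ ‖fₑ‖²_{H¹(0,1)})^{1/3} · (Σₑ ‖fₑ‖_{L¹(0,1)})^{4/3}, where c is the constant from the Nash inequality on (0,1). -/
/-- Global Nash inequality on a countable disjoint union of unit intervals: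
if the edgewise norms `L2 e = ‖fₑ‖_{L²}`, `H1 e = ‖fₑ‖_{H¹}`, `L1 e = ‖fₑ‖_{L¹}` satisfy the
Nash inequality `L2 e ≤ c (H1 e)^{1/3} (L1 e)^{2/3}` on each edge, `Σ (H1 e)² < ∞` and
`Σ L1 e < ∞`, then `‖f‖²_{L²(Γ)} = Σ (L2 e)² ≤ c² (Σ (H1 e)²)^{1/3} (Σ L1 e)^{4/3}`. -/
theorem stmt5 {E : Type*} [Countable E] (c : ℝ) (hc : 0 < c)
    (L2 H1 L1 : E → ℝ) (hL2 : ∀ e, 0 ≤ L2 e) (hH1 : ∀ e, 0 ≤ H1 e) (hL1 : ∀ e, 0 ≤ L1 e)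
    (nash : ∀ e, L2 e ≤ c * (H1 e) ^ ((1:ℝ)/3) * (L1 e) ^ ((2:ℝ)/3))
    (hH1s : Summable fun e => (H1 e) ^ 2) (hL1s : Summable L1) :
    ∑' e, (L2 e) ^ 2
      ≤ c ^ 2 * (∑' e, (H1 e) ^ 2) ^ ((1:ℝ)/3) * (∑' e, L1 e) ^ ((4:ℝ)/3) := by
  set f : E → ℝ := fun e => (H1 e) ^ ((2:ℝ)/3) with hf
  set g : E → ℝ := fun e => (L1 e) ^ ((4:ℝ)/3) with hg
  have hpq : (3:ℝ).HolderConjugate (3/2) := by constructor <;> norm_num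
  have hfnn : ∀ e, 0 ≤ f e := fun e => Real.rpow_nonneg (hH1 e) _
  have hgnn : ∀ e, 0 ≤ g e := fun e => Real.rpow_nonneg (hL1 e) _
  have hfp : ∀ e, f e ^ (3:ℝ) = (H1 e) ^ 2 := by
    intro e
    rw [hf, ← Real.rpow_natCast (H1 e) 2, ← Real.rpow_mul (hH1 e)]
    norm_num
  have hgq : ∀ e, g e ^ ((3:ℝ)/2) = (L1 e) ^ 2 := by
    intro e
    rw [hg, ← Real.rpow_natCast (L1 e) 2, ← Real.rpow_mul (hL1 e)]
    norm_num
  have hL1sq : Summable fun e => (L1 e) ^ 2 := by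
    apply Summable.of_nonneg_of_le (fun e => sq_nonneg _)
      (fun e => ?_) (hL1s.mul_right (∑' e, L1 e))
    have := hL1s.le_tsum e (fun _ _ => hL1 _)
    calc L1 e ^ 2 = L1 e * L1 e := sq (L1 e) ▸ rfl
      _ ≤ L1 e * ∑' e, L1 e := by
          exact mul_le_mul_of_nonneg_left this (hL1 e)
  have hfps : Summable fun e => f e ^ (3:ℝ) := by
    simpa only [hfp] using hH1s
  have hgqs : Summable fun e => g e ^ ((3:ℝ)/2) := by
    simpa only [hgq] using hL1sq
  obtain ⟨hfgsum, hholder⟩ :=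
    Real.summable_and_inner_le_Lp_mul_Lq_tsum_of_nonneg hpq hfnn hgnn hfps hgqs
  -- pointwise: L2 e ^ 2 ≤ c^2 * (f e * g e)
  have hpt : ∀ e, L2 e ^ 2 ≤ c ^ 2 * (f e * g e) := by
    intro e
    have h1 : L2 e ^ 2 ≤ (c * (H1 e) ^ ((1:ℝ)/3) * (L1 e) ^ ((2:ℝ)/3)) ^ 2 := by
      apply sq_le_sq' _ (nash e)
      have : 0 ≤ c * (H1 e) ^ ((1:ℝ)/3) * (L1 e) ^ ((2:ℝ)/3) :=
        mul_nonneg (mul_nonneg hc.le (Real.rpow_nonneg (hH1 e) _)) (Real.rpow_nonneg (hL1 e) _)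
      linarith [hL2 e]
    refine h1.trans_eq ?_
    rw [mul_pow, mul_pow, hf, hg]
    rw [← Real.rpow_natCast ((H1 e) ^ ((1:ℝ)/3)) 2, ← Real.rpow_mul (hH1 e),
        ← Real.rpow_natCast ((L1 e) ^ ((2:ℝ)/3)) 2, ← Real.rpow_mul (hL1 e)]
    norm_num
    ring
  have hsum1 : Summable fun e => L2 e ^ 2 := by
    apply Summable.of_nonneg_of_le (fun e => sq_nonneg _) hpt
      ((hfgsum.mul_left _))
  have step1 : ∑' e, L2 e ^ 2 ≤ c ^ 2 * ∑' e, f e * g e := by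
    rw [← tsum_mul_left]
    exact Summable.tsum_le_tsum hpt hsum1 (hfgsum.mul_left _)
  have hL1le : ∑' e, (L1 e) ^ 2 ≤ (∑' e, L1 e) ^ 2 := by
    have : ∀ e, L1 e ^ 2 ≤ L1 e * ∑' e, L1 e := by
      intro e
      have := hL1s.le_tsum e (fun _ _ => hL1 _)
      calc L1 e ^ 2 = L1 e * L1 e := sq (L1 e) ▸ rfl
        _ ≤ L1 e * ∑' e, L1 e := mul_le_mul_of_nonneg_left this (hL1 e)
    calc ∑' e, L1 e ^ 2 ≤ ∑' e, L1 e * ∑' e', L1 e' :=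
          Summable.tsum_le_tsum this hL1sq (hL1s.mul_right _)
      _ = (∑' e, L1 e) ^ 2 := by rw [tsum_mul_right, sq]
  have hS1nn : 0 ≤ ∑' e, L1 e := tsum_nonneg hL1
  have step2 : ∑' e, f e * g e
      ≤ (∑' e, (H1 e) ^ 2) ^ ((1:ℝ)/3) * (∑' e, L1 e) ^ ((4:ℝ)/3) := by
    refine hholder.trans ?_
    have e1 : (∑' e, f e ^ (3:ℝ)) = ∑' e, (H1 e) ^ 2 := by simp only [hfp]
    have e2 : (∑' e, g e ^ ((3:ℝ)/2)) = ∑' e, (L1 e) ^ 2 := by simp only [hgq]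
    rw [e1, e2]
    gcongr
    · calc (∑' e, (L1 e) ^ 2) ^ (1 / ((3:ℝ)/2))
          ≤ ((∑' e, L1 e) ^ 2) ^ (1 / ((3:ℝ)/2)) := by
            gcongr
        _ = (∑' e, L1 e) ^ ((4:ℝ)/3) := by
            rw [← Real.rpow_natCast (∑' e, L1 e) 2, ← Real.rpow_mul hS1nn]
            norm_num
  calc ∑' e, L2 e ^ 2 ≤ c ^ 2 * ∑' e, f e * g e := step1
    _ ≤ _ := by
        rw [mul_assoc]
        exact mul_le_mul_of_nonneg_left step2 (by positivity)
end

section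
/- Let J be a finite index set, μ a probability measure on ℝ that is Hölder continuous with exponent α (i.e. μ([x, x+ε]) ≤ C·ε^α for all x and small ε ≥ 0, with C = 1), and μ^J the product measure on ℝ^J. Let Φ : ℝ^J → ℝ be monotone (coordinatewise nondecreasing) and suppose there are δ > 0 and a > 0 such that Φ(q + t·(1,…,1)) − Φ(q) ≥ t·a for all t ∈ [0, δ] and all q ∈ ℝ^J. Then for every interval I of length ε ≤ a·δ, μ^J({q : Φ(q) ∈ I}) ≤ |J| · (ε/a)^α. -/
open MeasureTheory
open scoped ENNReal NNReal

lemma aux_cross (f : ℕ → ℝ) (y : ℝ) (n : ℕ) (h0 : f 0 < y) (hn : y ≤ f n) :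
    ∃ k < n, f k < y ∧ y ≤ f (k + 1) := by
  classical
  have hex : ∃ m, y ≤ f m := ⟨n, hn⟩
  have hKle : Nat.find hex ≤ n := Nat.find_le hn
  have hKy : y ≤ f (Nat.find hex) := Nat.find_spec hex
  have hK0 : Nat.find hex ≠ 0 := by
    intro h; rw [h] at hKy; linarith
  refine ⟨Nat.find hex - 1, by omega, ?_, ?_⟩
  · have := Nat.find_min hex (show Nat.find hex - 1 < Nat.find hex by omega)
    exact not_le.mp this
  · rwa [show Nat.find hex - 1 + 1 = Nat.find hex by omega]

lemma aux_slice {J : Type*} [Fintype J] [DecidableEq J] (μ : Measure ℝ) [IsProbabilityMeasure μ]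
    (B : Set (J → ℝ)) (hB : MeasurableSet B) (j0 : J) (t : ℝ) (m : ℝ≥0∞)
    (hm : ∀ s₀ : ℝ, μ (Set.Icc s₀ (s₀ + t)) ≤ m)
    (hsl : ∀ (q : J → ℝ) (s s' : ℝ),
      Function.update q j0 s ∈ B → Function.update q j0 s' ∈ B → s' ≤ s + t) :
    Measure.pi (fun _ : J => μ) B ≤ m := by
  classical
  set p : J → Prop := fun j => j ≠ j0 with hp
  have hu0 : ¬ p j0 := by simp [hp]
  haveI hUniq : Unique {j // ¬ p j} :=
    ⟨⟨⟨j0, hu0⟩⟩, by rintro ⟨j, hj⟩; simp [hp] at hj; subst hj; rfl⟩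
  set φ := MeasurableEquiv.piEquivPiSubtypeProd (fun _ : J => ℝ) p with hφ
  have hmp := measurePreserving_piEquivPiSubtypeProd (fun _ : J => μ) p
  set s : Set (({j // p j} → ℝ) × ({j // ¬ p j} → ℝ)) := φ.symm ⁻¹' B with hs
  have hsm : MeasurableSet s := φ.symm.measurable hB
  have hBs : B = φ ⁻¹' s := by
    ext q; simp [hs]
  rw [hBs, hmp.measure_preimage_equiv s, Measure.prod_apply hsm]
  have hbound : ∀ x : {j // p j} → ℝ,
      (Measure.pi fun _ : {j // ¬ p j} => μ) (Prod.mk x ⁻¹' s) ≤ m := by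
    intro x
    set qx : J → ℝ := fun j => if h : p j then x ⟨j, h⟩ else 0 with hqx
    have hsymm : ∀ g : {j // ¬ p j} → ℝ,
        φ.symm (x, g) = Function.update qx j0 (g default) := by
      intro g
      funext j
      have : φ.symm (x, g) j = if h : p j then x ⟨j, h⟩ else g ⟨j, h⟩ := rfl
      rw [this]
      by_cases h : p j
      · rw [dif_pos h, Function.update_of_ne h]; simp only [hqx]; rw [dif_pos h]
      · rw [dif_neg h]
        have hj : j = j0 := by simpa [hp] using h
        subst hj
        rw [Function.update_self]
        congr 1
        exact Subsingleton.elim _ _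
    set T : Set ℝ := {z : ℝ | Function.update qx j0 z ∈ B} with hT
    have hpre : Prod.mk x ⁻¹' s = (fun g : {j // ¬ p j} → ℝ => g default) ⁻¹' T := by
      ext g; simp only [Set.mem_preimage, hs, hsymm g, hT, Set.mem_setOf_eq]
    rw [hpre]
    rcases T.eq_empty_or_nonempty with hTe | hTne
    · simp [hTe]
    · have hbdd : BddBelow T := by
        obtain ⟨z1, hz1⟩ := hTne
        exact ⟨z1 - t, fun z hz => by linarith [hsl qx z z1 hz hz1]⟩
      set s₀ := sInf T with hs₀
      have hTsub : T ⊆ Set.Icc s₀ (s₀ + t) := by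
        intro z hz
        refine ⟨csInf_le hbdd hz, ?_⟩
        have : z - t ≤ s₀ := le_csInf hTne fun z' hz' => by linarith [hsl qx z' z hz' hz]
        linarith
      calc (Measure.pi fun _ : {j // ¬ p j} => μ)
            ((fun g : {j // ¬ p j} → ℝ => g default) ⁻¹' T)
          ≤ (Measure.pi fun _ : {j // ¬ p j} => μ)
            ((fun g : {j // ¬ p j} → ℝ => g default) ⁻¹' (Set.Icc s₀ (s₀ + t))) :=
            measure_mono (Set.preimage_mono hTsub)
        _ = μ (Set.Icc s₀ (s₀ + t)) := by
            have : (fun g : {j // ¬ p j} → ℝ => g default) ⁻¹' (Set.Icc s₀ (s₀ + t))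
                = Set.pi Set.univ (fun _ => Set.Icc s₀ (s₀ + t)) := by
              ext g
              simp [Set.mem_pi, Set.mem_Icc, Pi.le_def, Unique.forall_iff]
            rw [this, Measure.pi_pi]
            simp
        _ ≤ m := hm s₀
  calc ∫⁻ x, (Measure.pi fun _ : {j // ¬ p j} => μ) (Prod.mk x ⁻¹' s)
        ∂(Measure.pi fun _ : {j // p j} => μ)
      ≤ ∫⁻ _, m ∂(Measure.pi fun _ : {j // p j} => μ) := lintegral_mono hbound
    _ = m := by simp

lemma aux_key {J : Type*} [Fintype J] (μ : Measure ℝ) [IsProbabilityMeasure μ]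
    (α : ℝ) (hα : 0 < α)
    (hHolder : ∀ x ε : ℝ, 0 ≤ ε → (μ (Set.Icc x (x + ε))).toReal ≤ ε ^ α)
    (Φ : (J → ℝ) → ℝ) (hmono : Monotone Φ)
    (δ a : ℝ) (hδ : 0 < δ) (ha : 0 < a)
    (hΦ : ∀ q : J → ℝ, ∀ t ∈ Set.Icc (0:ℝ) δ, t * a ≤ Φ (fun j => q j + t) - Φ q)
    (c ε : ℝ) (hε : 0 < ε) (hεaδ : ε ≤ a * δ) :
    (Measure.pi fun _ : J => μ) {q | c ≤ Φ q ∧ Φ q < c + ε}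
      ≤ (Fintype.card J : ℝ≥0∞) * ENNReal.ofReal ((ε / a) ^ α) := by
  classical
  set t := ε / a with htdef
  have ht0 : 0 < t := div_pos hε ha
  have htδ : t ≤ δ := by
    rw [htdef, div_le_iff₀ ha]; linarith
  have hta : t * a = ε := div_mul_cancel₀ ε ha.ne'
  set n := Fintype.card J with hn
  set e := Fintype.equivFin J with he
  -- the regularized function Ψ
  set Ψ : (J → ℝ) → ℝ := fun q =>
    sSup ((fun r : J → ℚ => Φ fun j => (r j : ℝ)) '' {r | ∀ j, (r j : ℝ) ≤ q j}) with hΨdef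
  have hne : ∀ q : J → ℝ,
      ((fun r : J → ℚ => Φ fun j => (r j : ℝ)) '' {r | ∀ j, (r j : ℝ) ≤ q j}).Nonempty := by
    intro q
    refine Set.Nonempty.image _ ⟨fun j => (⌊q j⌋ : ℚ), fun j => ?_⟩
    push_cast
    exact Int.floor_le _
  have hbdd : ∀ q : J → ℝ,
      BddAbove ((fun r : J → ℚ => Φ fun j => (r j : ℝ)) '' {r | ∀ j, (r j : ℝ) ≤ q j}) := by
    intro q
    refine ⟨Φ q, ?_⟩
    rintro y ⟨r, hr, rfl⟩
    exact hmono fun j => hr j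
  have hΨ_le : ∀ q, Ψ q ≤ Φ q := by
    intro q
    refine csSup_le (hne q) ?_
    rintro y ⟨r, hr, rfl⟩
    exact hmono fun j => hr j
  have hΨ_mono : Monotone Ψ := by
    intro q q' hqq'
    exact csSup_le_csSup (hbdd q') (hne q)
      (Set.image_mono fun r hr j => (hr j).trans (hqq' j))
  have hΨ_ge : ∀ (q : J → ℝ) (r : J → ℚ), (∀ j, (r j : ℝ) ≤ q j) →
      Φ (fun j => (r j : ℝ)) ≤ Ψ q := fun q r hr => le_csSup (hbdd q) ⟨r, hr, rfl⟩
  have hΨ_meas : Measurable Ψ := by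
    refine measurable_of_Ioi fun y => ?_
    have : Ψ ⁻¹' Set.Ioi y = ⋃ r : {r : J → ℚ // y < Φ fun j => (r j : ℝ)},
        {q : J → ℝ | ∀ j, ((r : J → ℚ) j : ℝ) ≤ q j} := by
      ext q
      simp only [Set.mem_preimage, Set.mem_Ioi, Set.mem_iUnion, Set.mem_setOf_eq]
      constructor
      · intro h
        obtain ⟨z, ⟨r, hr, rfl⟩, hy⟩ := (lt_csSup_iff (hbdd q) (hne q)).mp h
        exact ⟨⟨r, hy⟩, hr⟩
      · rintro ⟨⟨r, hy⟩, hr⟩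
        exact lt_of_lt_of_le hy (hΨ_ge q r hr)
    rw [this]
    refine MeasurableSet.iUnion fun r => ?_
    rw [Set.setOf_forall]
    exact MeasurableSet.iInter fun j =>
      measurableSet_le measurable_const (measurable_pi_apply j)
  -- the key diagonal estimate for Ψ
  have hdiag : ∀ q : J → ℝ, c ≤ Φ q → c + t * a ≤ Ψ (fun j => q j + t) := by
    intro q hq
    refine le_of_forall_lt fun b hb => ?_
    have hw : max 0 ((b - c) / a) < t := by
      rw [max_lt_iff]
      exact ⟨ht0, by rw [div_lt_iff₀ ha]; linarith⟩
    obtain ⟨t', ht'1, ht'2⟩ := exists_rat_btwn hw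
    have ht'0 : 0 < (t' : ℝ) := lt_of_le_of_lt (le_max_left _ _) ht'1
    have ht'b : b < c + t' * a := by
      have : (b - c) / a < t' := lt_of_le_of_lt (le_max_right _ _) ht'1
      rw [div_lt_iff₀ ha] at this
      linarith
    have hrex : ∀ j, ∃ rj : ℚ, q j < rj ∧ (rj : ℝ) < q j + (t - t') := fun j =>
      exists_rat_btwn (by linarith)
    choose r hr1 hr2 using hrex
    have hΦr : c ≤ Φ fun j => (r j : ℝ) := hq.trans (hmono fun j => (hr1 j).le)
    have hstep := hΦ (fun j => (r j : ℝ)) t' ⟨ht'0.le, by linarith⟩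
    have hfinal : b < Φ fun j => ((r j : ℝ) + t') := by nlinarith
    refine lt_of_lt_of_le ?_ (hΨ_ge (fun j => q j + t) (fun j => r j + t') fun j => ?_)
    · have : (fun j => ((r j + t' : ℚ) : ℝ)) = fun j => ((r j : ℝ) + t') := by
        funext j; push_cast; ring
      rw [this]; exact hfinal
    · push_cast
      linarith [hr2 j]
  -- the shift maps
  set S : ℕ → (J → ℝ) → J → ℝ := fun m q j => q j + if (e j : ℕ) < m then t else 0 with hS
  have hS0 : ∀ q, S 0 q = q := by intro q; funext j; simp [hS]
  have hSn : ∀ q, S n q = fun j => q j + t := by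
    intro q; funext j; simp [hS, (e j).isLt.trans_eq hn.symm]
  have hSmeas : ∀ m, Measurable (S m) := fun m =>
    measurable_pi_lambda _ fun j => (measurable_pi_apply j).add_const _
  -- the covering sets
  set A : ℕ → Set (J → ℝ) := fun k =>
    {q | Ψ (S k q) < c + ε ∧ c + ε ≤ Ψ (S (k+1) q)} with hA
  have hAmeas : ∀ k, MeasurableSet (A k) := by
    intro k
    have : A k = (Ψ ∘ S k) ⁻¹' Set.Iio (c + ε) ∩ (Ψ ∘ S (k+1)) ⁻¹' Set.Ici (c + ε) := rfl
    rw [this]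
    exact ((hΨ_meas.comp (hSmeas k)) measurableSet_Iio).inter
      ((hΨ_meas.comp (hSmeas (k+1))) measurableSet_Ici)
  -- covering
  have hcover : {q : J → ℝ | c ≤ Φ q ∧ Φ q < c + ε} ⊆ ⋃ k ∈ Finset.range n, A k := by
    rintro q ⟨hq1, hq2⟩
    have h0 : Ψ (S 0 q) < c + ε := by
      rw [hS0]; exact (hΨ_le q).trans_lt hq2
    have hnn : c + ε ≤ Ψ (S n q) := by
      rw [hSn]
      have := hdiag q hq1
      rwa [hta] at this
    obtain ⟨k, hk, h1, h2⟩ := aux_cross (fun m => Ψ (S m q)) (c + ε) n h0 hnn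
    exact Set.mem_biUnion (Finset.mem_range.mpr hk) ⟨h1, h2⟩
  -- per-set bound
  have hper : ∀ k, k < n → (Measure.pi fun _ : J => μ) (A k) ≤ ENNReal.ofReal (t ^ α) := by
    intro k hk
    refine aux_slice μ (A k) (hAmeas k) (e.symm ⟨k, hk⟩) t _ ?_ ?_
    · intro s₀
      rw [ENNReal.le_ofReal_iff_toReal_le (measure_ne_top _ _) (Real.rpow_nonneg ht0.le α)]
      exact hHolder s₀ t ht0.le
    · intro q s s' hmem hmem'
      by_contra hcon
      push_neg at hcon
      have hej0 : (e (e.symm ⟨k, hk⟩) : ℕ) = k := by rw [Equiv.apply_symm_apply]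
      have hle : S (k+1) (Function.update q (e.symm ⟨k, hk⟩) s)
          ≤ S k (Function.update q (e.symm ⟨k, hk⟩) s') := by
        intro j
        by_cases hj : j = e.symm ⟨k, hk⟩
        · subst hj
          simp only [hS, Function.update_self, hej0]
          rw [if_pos (Nat.lt_succ_self k), if_neg (lt_irrefl k)]
          linarith
        · have hejk : (e j : ℕ) ≠ k := by
            intro hc
            apply hj
            have : e j = ⟨k, hk⟩ := Fin.ext hc
            rw [← this, Equiv.symm_apply_apply]
          simp only [hS, Function.update_of_ne hj]
          have : ((e j : ℕ) < k + 1) ↔ ((e j : ℕ) < k) := by omega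
          rw [if_congr this rfl rfl]
      have := (hΨ_mono hle).trans_lt hmem'.1
      exact absurd hmem.2 (not_le.mpr this)
  calc (Measure.pi fun _ : J => μ) {q | c ≤ Φ q ∧ Φ q < c + ε}
      ≤ (Measure.pi fun _ : J => μ) (⋃ k ∈ Finset.range n, A k) := measure_mono hcover
    _ ≤ ∑ k ∈ Finset.range n, (Measure.pi fun _ : J => μ) (A k) :=
        measure_biUnion_finset_le _ _
    _ ≤ ∑ k ∈ Finset.range n, ENNReal.ofReal (t ^ α) :=
        Finset.sum_le_sum fun k hk => hper k (Finset.mem_range.mp hk)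
    _ = (n : ℝ≥0∞) * ENNReal.ofReal (t ^ α) := by
        rw [Finset.sum_const, Finset.card_range, nsmul_eq_mul]


/-- Monotone-function lemma (Stollmann): if `μ` is a Hölder continuous probability measure with
exponent `α`, `Φ : ℝ^J → ℝ` is coordinatewise nondecreasing and
`Φ(q + t(1,…,1)) − Φ(q) ≥ t·a` for `t ∈ [0,δ]`, then for any interval `I` of length `ε ≤ aδ`
the product measure of `{q : Φ(q) ∈ I}` is at most `|J| (ε/a)^α`. -/
theorem stmt6 {J : Type*} [Fintype J] (μ : Measure ℝ) [IsProbabilityMeasure μ]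
    (α : ℝ) (hα : 0 < α)
    (hHolder : ∀ x ε : ℝ, 0 ≤ ε → (μ (Set.Icc x (x + ε))).toReal ≤ ε ^ α)
    (Φ : (J → ℝ) → ℝ) (hmono : Monotone Φ)
    (δ a : ℝ) (hδ : 0 < δ) (ha : 0 < a)
    (hΦ : ∀ q : J → ℝ, ∀ t ∈ Set.Icc (0:ℝ) δ, t * a ≤ Φ (fun j => q j + t) - Φ q)
    (c ε : ℝ) (hε : 0 ≤ ε) (hεaδ : ε ≤ a * δ) :
    ((Measure.pi fun _ : J => μ) {q | Φ q ∈ Set.Icc c (c + ε)}).toReal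
      ≤ (Fintype.card J : ℝ) * (ε / a) ^ α := by
  classical
  set n := Fintype.card J with hn
  -- level sets are null
  have hnull : ∀ c' : ℝ, (Measure.pi fun _ : J => μ) {q | Φ q = c'} = 0 := by
    intro c'
    refine le_antisymm ?_ zero_le
    refine ENNReal.le_of_forall_pos_le_add fun ε' hε' _ => ?_
    rw [zero_add]
    set β := ((ε' : ℝ) / (n + 1)) ^ (α⁻¹) with hβ
    have hβ0 : 0 < β := Real.rpow_pos_of_pos (div_pos hε' (by positivity)) _
    set η := a * min δ β with hη
    have hη0 : 0 < η := mul_pos ha (lt_min hδ hβ0)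
    have hsub : {q : J → ℝ | Φ q = c'} ⊆ {q | c' ≤ Φ q ∧ Φ q < c' + η} := by
      intro q hq
      simp only [Set.mem_setOf_eq] at hq ⊢
      exact ⟨hq.ge, by linarith⟩
    have hηa : η / a = min δ β := by
      rw [hη, mul_comm, mul_div_assoc, div_self ha.ne', mul_one]
    have hkey := aux_key μ α hα hHolder Φ hmono δ a hδ ha hΦ c' η hη0
      (by rw [hη]; exact mul_le_mul_of_nonneg_left (min_le_left _ _) ha.le)
    have hpow : (η / a) ^ α ≤ (ε' : ℝ) / (n + 1) := by
      rw [hηa]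
      have h1 : (min δ β) ^ α ≤ β ^ α :=
        Real.rpow_le_rpow (le_of_lt (lt_min hδ hβ0)) (min_le_right _ _) hα.le
      have h2 : β ^ α = (ε' : ℝ) / (n + 1) := by
        rw [hβ, ← Real.rpow_mul (by positivity), inv_mul_cancel₀ hα.ne', Real.rpow_one]
      linarith
    calc (Measure.pi fun _ : J => μ) {q | Φ q = c'}
        ≤ (Measure.pi fun _ : J => μ) {q | c' ≤ Φ q ∧ Φ q < c' + η} := measure_mono hsub
      _ ≤ (n : ℝ≥0∞) * ENNReal.ofReal ((η / a) ^ α) := hkey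
      _ ≤ (n : ℝ≥0∞) * ENNReal.ofReal ((ε' : ℝ) / (n + 1)) :=
          mul_le_mul_right (ENNReal.ofReal_le_ofReal hpow) _
      _ ≤ ((n : ℝ≥0∞) + 1) * ENNReal.ofReal ((ε' : ℝ) / (n + 1)) :=
          mul_le_mul_left le_self_add _
      _ = (ε' : ℝ≥0∞) := by
          rw [ENNReal.ofReal_div_of_pos (by positivity), ENNReal.ofReal_coe_nnreal]
          have hcast : ENNReal.ofReal ((n : ℝ) + 1) = (n : ℝ≥0∞) + 1 := by
            rw [ENNReal.ofReal_add (by positivity) zero_le_one, ENNReal.ofReal_natCast,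
              ENNReal.ofReal_one]
          rw [hcast]
          exact ENNReal.mul_div_cancel' (by simp) (by simp)
  -- split the set
  have hsplit : {q : J → ℝ | Φ q ∈ Set.Icc c (c + ε)} ⊆
      {q | c ≤ Φ q ∧ Φ q < c + ε} ∪ {q | Φ q = c + ε} := by
    rintro q ⟨h1, h2⟩
    rcases h2.lt_or_eq with h | h
    · exact Or.inl ⟨h1, h⟩
    · exact Or.inr h
  have hfirst : (Measure.pi fun _ : J => μ) {q | c ≤ Φ q ∧ Φ q < c + ε}
      ≤ (n : ℝ≥0∞) * ENNReal.ofReal ((ε / a) ^ α) := by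
    rcases hε.eq_or_lt with h | h
    · have : {q : J → ℝ | c ≤ Φ q ∧ Φ q < c + ε} = ∅ := by
        ext q; simp only [Set.mem_setOf_eq, Set.mem_empty_iff_false, iff_false]
        rintro ⟨h1, h2⟩; rw [← h] at h2; linarith
      rw [this]; simp
    · exact aux_key μ α hα hHolder Φ hmono δ a hδ ha hΦ c ε h hεaδ
  have hb : (Measure.pi fun _ : J => μ) {q | Φ q ∈ Set.Icc c (c + ε)}
      ≤ (n : ℝ≥0∞) * ENNReal.ofReal ((ε / a) ^ α) := by
    calc (Measure.pi fun _ : J => μ) {q | Φ q ∈ Set.Icc c (c + ε)}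
        ≤ (Measure.pi fun _ : J => μ)
          ({q | c ≤ Φ q ∧ Φ q < c + ε} ∪ {q | Φ q = c + ε}) := measure_mono hsplit
      _ ≤ (Measure.pi fun _ : J => μ) {q | c ≤ Φ q ∧ Φ q < c + ε}
          + (Measure.pi fun _ : J => μ) {q | Φ q = c + ε} := measure_union_le _ _
      _ ≤ (n : ℝ≥0∞) * ENNReal.ofReal ((ε / a) ^ α) + 0 :=
          add_le_add hfirst (le_of_eq (hnull (c + ε)))
      _ = (n : ℝ≥0∞) * ENNReal.ofReal ((ε / a) ^ α) := add_zero _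
  have hfin : (n : ℝ≥0∞) * ENNReal.ofReal ((ε / a) ^ α) ≠ ⊤ :=
    ENNReal.mul_ne_top (ENNReal.natCast_ne_top n) ENNReal.ofReal_ne_top
  calc ((Measure.pi fun _ : J => μ) {q | Φ q ∈ Set.Icc c (c + ε)}).toReal
      ≤ ((n : ℝ≥0∞) * ENNReal.ofReal ((ε / a) ^ α)).toReal := ENNReal.toReal_mono hfin hb
    _ = (n : ℝ) * (ε / a) ^ α := by
        rw [ENNReal.toReal_mul, ENNReal.toReal_ofReal (Real.rpow_nonneg (div_nonneg hε ha.le) α)]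
        norm_num
end

section
/- Let μ be a Hölder continuous probability measure on ℝ with exponent α (μ of any interval of length h is ≤ h^α), and let the restricted box Hamiltonian H_Λ(ω) have at most N eigenvalues in (−R, R), each eigenvalue Eₙ(ω) being a coordinatewise-nondecreasing function of the coupling constants (ω_e)_{e ∈ E(Λ)} satisfying Eₙ(ω + t·𝟙) = Eₙ(ω) + t. Then for every interval I ⊂ (−R,R), P{σ(H_Λ(ω)) ∩ I ≠ ∅} ≤ N · |E(Λ)| · |I|^α. -/
open MeasureTheory
open scoped ENNReal

private lemma wegner_lipschitz {J : Type*} [Fintype J] (f : (J → ℝ) → ℝ)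
    (hmono : Monotone f) (hcov : ∀ (q : J → ℝ) (t : ℝ), f (fun j => q j + t) = f q + t) :
    Measurable f := by
  have key : ∀ p q : J → ℝ, f p - f q ≤ dist p q := by
    intro p q
    have h1 : p ≤ fun j => q j + dist p q := by
      intro j
      show p j ≤ q j + dist p q
      have h2 := dist_le_pi_dist p q j
      rw [Real.dist_eq] at h2
      have h3 := (abs_le.mp h2).2
      linarith
    have := hmono h1
    rw [hcov q (dist p q)] at this
    linarith
  have lip : LipschitzWith 1 f := by
    apply LipschitzWith.of_dist_le_mul
    intro p q
    rw [NNReal.coe_one, one_mul, Real.dist_eq, abs_le]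
    constructor
    · linarith [key q p, dist_comm p q, dist_nonneg (x := p) (y := q)]
    · linarith [key p q]
  exact lip.continuous.measurable

private lemma wegner_slice {J : Type*} [Fintype J] [DecidableEq J] (μ : Measure ℝ)
    [IsProbabilityMeasure μ] (j : J) (D : Set (J → ℝ)) (hD : MeasurableSet D) (ε B : ℝ)
    (hμ : ∀ x : ℝ, μ (Set.Icc x (x + ε)) ≤ ENNReal.ofReal B)
    (hsec : ∀ p q : J → ℝ, p ∈ D → q ∈ D → (∀ j', j' ≠ j → p j' = q j') → q j ≤ p j + ε) :
    Measure.pi (fun _ : J => μ) D ≤ ENNReal.ofReal B := by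
  classical
  set P : J → Prop := fun j' => j' = j with hP
  set e := MeasurableEquiv.piEquivPiSubtypeProd (fun _ : J => ℝ) P with he
  have hmp := measurePreserving_piEquivPiSubtypeProd (fun _ : J => μ) P
  set s : Set (({j' // P j'} → ℝ) × ({j' // ¬ P j'} → ℝ)) := e.symm ⁻¹' D with hs
  have hsm : MeasurableSet s := e.symm.measurable hD
  have hDe : D = e ⁻¹' s := by
    rw [hs, ← Set.preimage_comp]
    simp
  rw [hDe, hmp.measure_preimage hsm.nullMeasurableSet, Measure.prod_apply_symm hsm]
  refine le_trans (lintegral_mono (g := fun _ => ENNReal.ofReal B) fun y => ?_) (by simp)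
  · by_cases hne : ((fun x : _ → ℝ => (x, y)) ⁻¹' s).Nonempty
    · -- values at j of elements of the section
      set T : Set ℝ := (fun x : {j' // P j'} → ℝ => x ⟨j, rfl⟩) '' ((fun x => (x, y)) ⁻¹' s) with hT
      have hmemD : ∀ x : {j' // P j'} → ℝ, x ∈ ((fun x => (x, y)) ⁻¹' s) → e.symm (x, y) ∈ D := by
        intro x hx; exact hx
    -- value of e.symm (x,y) at j is x ⟨j, rfl⟩
      have hval : ∀ x : {j' // P j'} → ℝ, e.symm (x, y) j = x ⟨j, rfl⟩ := by
        intro x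
        exact dif_pos rfl
      have hoff : ∀ x₁ x₂ : {j' // P j'} → ℝ, ∀ j', j' ≠ j →
          e.symm (x₁, y) j' = e.symm (x₂, y) j' := by
        intro x₁ x₂ j' hj'
        simp [he, MeasurableEquiv.piEquivPiSubtypeProd, Equiv.piEquivPiSubtypeProd, hj', hP]
      have hTd : ∀ a ∈ T, ∀ b ∈ T, a ≤ b + ε := by
        rintro a ⟨x₁, hx₁, rfl⟩ b ⟨x₂, hx₂, rfl⟩
        have := hsec (e.symm (x₂, y)) (e.symm (x₁, y)) (hmemD _ hx₂) (hmemD _ hx₁)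
          (fun j' hj' => hoff x₂ x₁ j' hj')
        rwa [hval, hval] at this
      obtain ⟨x₀, hx₀⟩ := hne
      have hTne : T.Nonempty := ⟨_, ⟨x₀, hx₀, rfl⟩⟩
      have hbdd : BddBelow T := by
        refine ⟨x₀ ⟨j, rfl⟩ - ε, fun b hb => ?_⟩
        have := hTd _ ⟨x₀, hx₀, rfl⟩ b hb
        linarith
      set mI := sInf T with hmI
      have hsub : ((fun x => (x, y)) ⁻¹' s) ⊆
          (fun x : {j' // P j'} → ℝ => x ⟨j, rfl⟩) ⁻¹' Set.Icc mI (mI + ε) := by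
        intro x hx
        have hvT : x ⟨j, rfl⟩ ∈ T := ⟨x, hx, rfl⟩
        constructor
        · exact csInf_le hbdd hvT
        · have : x ⟨j, rfl⟩ - ε ≤ mI := le_csInf hTne (fun b hb => by
            have := hTd _ hvT b hb; linarith)
          linarith
      refine le_trans (measure_mono hsub) ?_
      have hset : (fun x : {j' // P j'} → ℝ => x ⟨j, rfl⟩) ⁻¹' Set.Icc mI (mI + ε)
          = Set.pi Set.univ (fun _ => Set.Icc mI (mI + ε)) := by
        ext x
        simp only [Set.mem_preimage, Set.mem_pi, Set.mem_univ, forall_true_left]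
        constructor
        · intro h i
          have hi : i = ⟨j, rfl⟩ := Subsingleton.elim _ _
          rw [hi]; exact h
        · intro h; exact h ⟨j, rfl⟩
      rw [hset,
        @Measure.pi_pi {j' // P j'} (fun _ => ℝ) (Subtype.fintype P) (fun _ => Real.measurableSpace)
          (fun _ => μ) (fun _ => inferInstance) (fun _ => Set.Icc mI (mI + ε))]
      rw [@Fintype.prod_subsingleton ℝ≥0∞ {j' // P j'} (Subtype.fintype P) _ _
        (fun _ => μ (Set.Icc mI (mI + ε))) ⟨j, rfl⟩]
      exact hμ mI
    · rw [Set.not_nonempty_iff_eq_empty.mp hne]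
      simp

private lemma wegner_telescope {J : Type*} [Fintype J] (μ : Measure ℝ) [IsProbabilityMeasure μ]
    (f : (J → ℝ) → ℝ) (hmono : Monotone f)
    (hcov : ∀ (q : J → ℝ) (t : ℝ), f (fun j => q j + t) = f q + t)
    (c ε B : ℝ) (hε : 0 ≤ ε)
    (hμ : ∀ x : ℝ, μ (Set.Icc x (x + ε)) ≤ ENNReal.ofReal B) :
    Measure.pi (fun _ : J => μ) {q | c ≤ f q ∧ f q < c + ε}
      ≤ (Fintype.card J : ℝ≥0∞) * ENNReal.ofReal B := by
  classical
  set m := Fintype.card J with hm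
  set e := (Fintype.equivFin J).symm with he
  set χ : ℕ → J → ℝ := fun k j' => if ((e.symm j' : Fin m) : ℕ) < k then ε else 0 with hχ
  set A : ℕ → Set (J → ℝ) := fun k => {q | c + ε ≤ f fun j' => q j' + χ k j'} with hA
  have hfmeas : Measurable f := wegner_lipschitz f hmono hcov
  have hAmeas : ∀ k, MeasurableSet (A k) := by
    intro k
    have h1 : Measurable fun q : J → ℝ => f fun j' => q j' + χ k j' :=
      hfmeas.comp (measurable_pi_lambda _ fun j' => (measurable_pi_apply j').add_const _)
    exact measurableSet_le measurable_const h1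
  have hsub : ∀ k, A k ⊆ A (k + 1) := by
    intro k q hq
    refine le_trans hq (hmono fun j' => ?_)
    simp only
    have h2 : χ k j' ≤ χ (k + 1) j' := by
      simp only [hχ]
      split_ifs with h3 h4
      · exact le_refl _
      · omega
      · exact hε
      · exact le_refl _
    linarith
  have hA0 : A 0 = {q | c + ε ≤ f q} := by
    ext q
    simp [hA, hχ]
  have hAm : A m = {q | c ≤ f q} := by
    ext q
    have h1 : (fun j' => q j' + χ m j') = fun j' => q j' + ε := by
      funext j'
      simp [hχ, (e.symm j').isLt]
      intro h; exact absurd h (by have := (e.symm j').isLt; omega)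
    simp only [hA, Set.mem_setOf_eq, h1, hcov q ε]
    constructor <;> intro h <;> linarith
  have hcover : {q | c ≤ f q ∧ f q < c + ε} ⊆ ⋃ k ∈ Finset.range m, (A (k + 1) \ A k) := by
    intro q hq
    have hqm : q ∈ A m := by rw [hAm]; exact hq.1
    have hq0 : q ∉ A 0 := by
      rw [hA0]
      simp only [Set.mem_setOf_eq, not_le]
      exact hq.2
    have hex : ∃ k, q ∈ A k := ⟨m, hqm⟩
    have hKpos : Nat.find hex ≠ 0 := by
      intro h
      exact hq0 (h ▸ Nat.find_spec hex)
    have hKle : Nat.find hex ≤ m := Nat.find_le hqm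
    have hstep : q ∈ A (Nat.find hex - 1 + 1) := by
      have h2 : Nat.find hex - 1 + 1 = Nat.find hex := by omega
      rw [h2]
      exact Nat.find_spec hex
    refine Set.mem_biUnion (Finset.mem_range.2 (show Nat.find hex - 1 < m by omega)) ?_
    exact ⟨hstep, Nat.find_min hex (by omega)⟩
  have hkey : ∀ k ∈ Finset.range m,
      Measure.pi (fun _ : J => μ) (A (k + 1) \ A k) ≤ ENNReal.ofReal B := by
    intro k hk
    have hkm : k < m := Finset.mem_range.1 hk
    set j : J := e ⟨k, hkm⟩ with hj
    apply wegner_slice μ j _ ((hAmeas (k + 1)).diff (hAmeas k)) ε B hμ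
    intro p q hp hq hagree
    by_contra hcon
    push_neg at hcon
    have hle : (fun j' => p j' + χ (k + 1) j') ≤ fun j' => q j' + χ k j' := by
      intro j'
      simp only
      by_cases hj' : j' = j
      · subst hj'
        have h1 : χ (k + 1) j = ε := by
          simp [hχ, hj, Equiv.symm_apply_apply]
        have h2 : χ k j = 0 := by
          simp [hχ, hj, Equiv.symm_apply_apply]
        rw [h1, h2]
        linarith
      · rw [hagree j' hj']
        have h1 : ((e.symm j' : Fin m) : ℕ) ≠ k := by
          intro h
          apply hj'
          have : e.symm j' = ⟨k, hkm⟩ := Fin.ext h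
          rw [hj, ← this, Equiv.apply_symm_apply]
        have h2 : χ (k + 1) j' = χ k j' := by
          simp only [hχ]
          have : ((e.symm j' : Fin m) : ℕ) < k + 1 ↔ ((e.symm j' : Fin m) : ℕ) < k := by omega
          simp [this]
        rw [h2]
    have h3 : c + ε ≤ f fun j' => p j' + χ (k + 1) j' := hp.1
    have h4 : ¬ (c + ε ≤ f fun j' => q j' + χ k j') := hq.2
    exact h4 (le_trans h3 (hmono hle))
  calc Measure.pi (fun _ : J => μ) {q | c ≤ f q ∧ f q < c + ε}
      ≤ Measure.pi (fun _ : J => μ) (⋃ k ∈ Finset.range m, (A (k + 1) \ A k)) :=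
        measure_mono hcover
    _ ≤ ∑ k ∈ Finset.range m, Measure.pi (fun _ : J => μ) (A (k + 1) \ A k) :=
        measure_biUnion_finset_le _ _
    _ ≤ ∑ _k ∈ Finset.range m, ENNReal.ofReal B := Finset.sum_le_sum hkey
    _ = (m : ℝ≥0∞) * ENNReal.ofReal B := by
        simp [Finset.sum_const, Finset.card_range, nsmul_eq_mul]

/-- Abstract Wegner estimate: `μ` Hölder continuous with exponent `α`, the box Hamiltonian
`H_Λ(ω)` has at most `N` eigenvalues `Ev n ω` in `(−R,R)`, each coordinatewise nondecreasing
in the couplings `(ω_e)_{e ∈ E(Λ)}` with `Ev n (ω + t·𝟙) = Ev n ω + t`. Then for every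
interval `I ⊆ (−R,R)`, `P{σ(H_Λ(ω)) ∩ I ≠ ∅} ≤ N·|E(Λ)|·|I|^α`. -/
theorem stmt19 {J : Type*} [Fintype J] (μ : Measure ℝ) [IsProbabilityMeasure μ]
    (α : ℝ) (hα : 0 < α)
    (hHolder : ∀ x ε : ℝ, 0 ≤ ε → (μ (Set.Icc x (x + ε))).toReal ≤ ε ^ α)
    (R : ℝ) (N : ℕ) (σ : (J → ℝ) → Set ℝ) (Ev : Fin N → (J → ℝ) → ℝ)
    (hmono : ∀ n, Monotone (Ev n))
    (hcov : ∀ (n : Fin N) (q : J → ℝ) (t : ℝ), Ev n (fun j => q j + t) = Ev n q + t)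
    (hspec : ∀ (q : J → ℝ) (x : ℝ), x ∈ σ q → x ∈ Set.Ioo (-R) R → ∃ n, Ev n q = x)
    (c ε : ℝ) (hε : 0 ≤ ε) (hI : Set.Icc c (c + ε) ⊆ Set.Ioo (-R) R) :
    ((Measure.pi fun _ : J => μ) {q | (σ q ∩ Set.Icc c (c + ε)).Nonempty}).toReal
      ≤ (N : ℝ) * (Fintype.card J : ℝ) * ε ^ α := by
  classical
  set P := Measure.pi fun _ : J => μ with hPdef
  set m := Fintype.card J with hm
  have hcover : {q | (σ q ∩ Set.Icc c (c + ε)).Nonempty} ⊆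
      ⋃ n : Fin N, {q | Ev n q ∈ Set.Icc c (c + ε)} := by
    rintro q ⟨x, hxσ, hxI⟩
    obtain ⟨n, hn⟩ := hspec q x hxσ (hI hxI)
    exact Set.mem_iUnion.2 ⟨n, by rw [Set.mem_setOf_eq, hn]; exact hxI⟩
  have hbound : ∀ n : Fin N, (P {q | Ev n q ∈ Set.Icc c (c + ε)}).toReal ≤ (m : ℝ) * ε ^ α := by
    intro n
    have key : ∀ ε' : ℝ, ε < ε' →
        (P {q | Ev n q ∈ Set.Icc c (c + ε)}).toReal ≤ (m : ℝ) * ε' ^ α := by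
      intro ε' hε'
      have hε'0 : 0 ≤ ε' := le_trans hε hε'.le
      have hμ' : ∀ x : ℝ, μ (Set.Icc x (x + ε')) ≤ ENNReal.ofReal (ε' ^ α) := by
        intro x
        have h1 := hHolder x ε' hε'0
        rw [← ENNReal.ofReal_toReal (measure_ne_top μ _)]
        exact ENNReal.ofReal_le_ofReal h1
      have hsubset : {q | Ev n q ∈ Set.Icc c (c + ε)} ⊆
          {q | c ≤ Ev n q ∧ Ev n q < c + ε'} := by
        rintro q ⟨h1, h2⟩
        exact ⟨h1, by linarith⟩
      have h2 : P {q | Ev n q ∈ Set.Icc c (c + ε)} ≤ (m : ℝ≥0∞) * ENNReal.ofReal (ε' ^ α) :=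
        (measure_mono hsubset).trans
          (wegner_telescope μ (Ev n) (hmono n) (hcov n) c ε' (ε' ^ α) hε'0 hμ')
      have h3 : ((m : ℝ≥0∞) * ENNReal.ofReal (ε' ^ α)).toReal = (m : ℝ) * ε' ^ α := by
        rw [ENNReal.toReal_mul, ENNReal.toReal_ofReal (Real.rpow_nonneg hε'0 α)]
        simp
      calc (P {q | Ev n q ∈ Set.Icc c (c + ε)}).toReal
          ≤ ((m : ℝ≥0∞) * ENNReal.ofReal (ε' ^ α)).toReal := by
            apply ENNReal.toReal_mono _ h2
            refine ENNReal.mul_ne_top (by simp) ENNReal.ofReal_ne_top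
        _ = (m : ℝ) * ε' ^ α := h3
    have hcont : Filter.Tendsto (fun x : ℝ => (m : ℝ) * x ^ α) (nhdsWithin ε (Set.Ioi ε))
        (nhds ((m : ℝ) * ε ^ α)) := by
      apply Filter.Tendsto.mono_left _ nhdsWithin_le_nhds
      exact (continuousAt_const.mul (Real.continuousAt_rpow_const ε α (Or.inr hα.le)))
    exact ge_of_tendsto hcont (Filter.eventually_of_mem self_mem_nhdsWithin fun x hx => key x hx)
  have h1 : P {q | (σ q ∩ Set.Icc c (c + ε)).Nonempty}
      ≤ ∑ n : Fin N, P {q | Ev n q ∈ Set.Icc c (c + ε)} :=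
    (measure_mono hcover).trans ((measure_iUnion_le _).trans_eq (tsum_fintype _))
  have hsumne : (∑ n : Fin N, P {q | Ev n q ∈ Set.Icc c (c + ε)}) ≠ ⊤ :=
    ENNReal.sum_ne_top.2 fun n _ => measure_ne_top _ _
  calc (P {q | (σ q ∩ Set.Icc c (c + ε)).Nonempty}).toReal
      ≤ (∑ n : Fin N, P {q | Ev n q ∈ Set.Icc c (c + ε)}).toReal :=
        ENNReal.toReal_mono hsumne h1
    _ = ∑ n : Fin N, (P {q | Ev n q ∈ Set.Icc c (c + ε)}).toReal :=
        ENNReal.toReal_sum fun n _ => measure_ne_top _ _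
    _ ≤ ∑ _n : Fin N, (m : ℝ) * ε ^ α := Finset.sum_le_sum fun n _ => hbound n
    _ = (N : ℝ) * (m : ℝ) * ε ^ α := by
        simp [Finset.sum_const, Finset.card_univ]
        ring
end
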